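/- Cauchy index of a rational function via signed remainder sequences with alternative sign variations: for real polynomials p, q with p and q coprime and a < b, 2 · cindex_polyE a b q p = Var_alt(SRemS(p,q); a) − Var_alt(SRemS(p,q); b), where SRemS is the signed remainder (Sturm) sequence of p and q, and Var_alt evaluates the sequence of polynomials at a point and computes ∑|sign(x₁) − sign(x₂)| over consecutive pairs. -/

import Mathlib

open Complex Filter Topology Polynomial Set

open Classical in
noncomputable def jumpF (f : ℝ → ℝ) (F : Filter ℝ) : ℝ :=
  if Tendsto f F atTop then 1/2 else if Tendsto f F atBot then -1/2 else 0

noncomputable def cindexE (a b : ℝ) (f : ℝ → ℝ) : ℝ :=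
  (∑ᶠ x ∈ {x : ℝ | jumpF f (𝓝[>] x) ≠ 0 ∧ a ≤ x ∧ x < b}, jumpF f (𝓝[>] x)) -
  (∑ᶠ x ∈ {x : ℝ | jumpF f (𝓝[<] x) ≠ 0 ∧ a < x ∧ x ≤ b}, jumpF f (𝓝[<] x))

/-- The Cauchy index of the rational function `q/p` over `[a,b]`. -/
noncomputable def cindexPolyE (a b : ℝ) (q p : Polynomial ℝ) : ℝ :=
  cindexE a b fun x => q.eval x / p.eval x

/-- The signed remainder (Sturm-type) sequence of `p` and `q`, computed with fuel. -/
noncomputable def smodsAux : ℕ → Polynomial ℝ → Polynomial ℝ → List (Polynomial ℝ)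
  | 0, _, _ => []
  | n + 1, p, q => if p = 0 then [] else p :: smodsAux n q (-(p % q))

/-- The signed remainder sequence `SRemS(p,q) = [p, q, -(p mod q), ...]`. -/
noncomputable def smods (p q : Polynomial ℝ) : List (Polynomial ℝ) :=
  smodsAux (p.natDegree + q.natDegree + 2) p q

/-- Alternative sign-variation count of a list of reals:
`∑ |sign x₁ - sign x₂|` over consecutive pairs. -/
noncomputable def changesAlt : List ℝ → ℤ
  | [] => 0
  | [_] => 0
  | x :: y :: xs => |((SignType.sign x : ℤ)) - ((SignType.sign y : ℤ))| + changesAlt (y :: xs)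

/-- Evaluate a list of polynomials at a point and compute alternative sign variations. -/
noncomputable def changesAltPolyAt (ps : List (Polynomial ℝ)) (a : ℝ) : ℤ :=
  changesAlt (ps.map fun p => p.eval a)

section JumpF

variable {f g : ℝ → ℝ} {F : Filter ℝ} {c : ℝ}

lemma jumpF_congr (h : f =ᶠ[F] g) : jumpF f F = jumpF g F := by
  unfold jumpF
  rw [tendsto_congr' h, tendsto_congr' h]

lemma jumpF_of_atTop (h : Tendsto f F atTop) : jumpF f F = 1/2 := if_pos h

lemma not_tendsto_atTop_of_atBot [F.NeBot] (h : Tendsto f F atBot) : ¬ Tendsto f F atTop := by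
  intro h'
  have hbot : Tendsto f F (atBot ⊓ atTop) := tendsto_inf.mpr ⟨h, h'⟩
  rw [disjoint_atBot_atTop.eq_bot] at hbot
  exact ‹F.NeBot›.ne (Filter.map_eq_bot_iff.mp (le_bot_iff.mp hbot))

lemma jumpF_of_atBot [F.NeBot] (h : Tendsto f F atBot) : jumpF f F = -(1/2) := by
  unfold jumpF
  rw [if_neg (not_tendsto_atTop_of_atBot h), if_pos h]
  norm_num

lemma jumpF_of_tendsto_nhds [F.NeBot] (h : Tendsto f F (𝓝 c)) : jumpF f F = 0 := by
  unfold jumpF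
  rw [if_neg (not_tendsto_atTop_of_tendsto_nhds h),
    if_neg (not_tendsto_atBot_of_tendsto_nhds h)]

lemma jumpF_neg [F.NeBot] : jumpF (fun y => -(f y)) F = - jumpF f F := by
  by_cases h : Tendsto f F atTop
  · have h1 : jumpF (fun y => -(f y)) F = -(1/2) :=
      jumpF_of_atBot (tendsto_neg_atBot_iff.mpr h)
    rw [h1, jumpF_of_atTop h]
  · by_cases h' : Tendsto f F atBot
    · have h1 : jumpF (fun y => -(f y)) F = 1/2 :=
        jumpF_of_atTop (tendsto_neg_atTop_iff.mpr h')
      rw [h1, jumpF_of_atBot h']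
      norm_num
    · have e1 : ¬ Tendsto (fun y => -(f y)) F atTop := fun hc => h' (tendsto_neg_atTop_iff.mp hc)
      have e2 : ¬ Tendsto (fun y => -(f y)) F atBot := fun hc => h (tendsto_neg_atBot_iff.mp hc)
      unfold jumpF
      rw [if_neg e1, if_neg e2, if_neg h, if_neg h']
      norm_num

lemma jumpF_add_tendsto (h : Tendsto g F (𝓝 c)) :
    jumpF (fun y => f y + g y) F = jumpF f F := by
  have iffT : Tendsto (fun y => f y + g y) F atTop ↔ Tendsto f F atTop := by
    constructor
    · intro hfg
      have := h.neg.add_atTop hfg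
      simpa [neg_add_cancel_left] using this
    · intro hf
      exact (h.add_atTop hf).congr (fun y => add_comm _ _)
  have iffB : Tendsto (fun y => f y + g y) F atBot ↔ Tendsto f F atBot := by
    constructor
    · intro hfg
      have := h.neg.add_atBot hfg
      simpa [neg_add_cancel_left] using this
    · intro hf
      exact (h.add_atBot hf).congr (fun y => add_comm _ _)
  unfold jumpF
  rw [iffT, iffB]

end JumpF

section part2
variable {x c : ℝ} {n : ℕ} {F : Filter ℝ} {u v : ℝ → ℝ}

lemma tendsto_sub_pow_inv_right (x : ℝ) {n : ℕ} (hn : 0 < n) :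
    Tendsto (fun y : ℝ => ((y - x) ^ n)⁻¹) (𝓝[>] x) atTop := by
  apply tendsto_inv_nhdsGT_zero.comp
  rw [tendsto_nhdsWithin_iff]
  constructor
  · have : Tendsto (fun y : ℝ => (y - x) ^ n) (𝓝 x) (𝓝 ((x - x) ^ n)) :=
      ((continuous_id.sub continuous_const).pow n).tendsto x
    simpa [sub_self, zero_pow hn.ne'] using this.mono_left nhdsWithin_le_nhds
  · filter_upwards [self_mem_nhdsWithin] with y hy
    exact mem_Ioi.mpr (pow_pos (sub_pos.mpr hy) n)

lemma tendsto_sub_pow_inv_left (x : ℝ) {n : ℕ} (hn : 0 < n) :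
    Tendsto (fun y : ℝ => (-1 : ℝ) ^ n * ((y - x) ^ n)⁻¹) (𝓝[<] x) atTop := by
  have key : Tendsto (fun y : ℝ => ((x - y) ^ n)⁻¹) (𝓝[<] x) atTop := by
    apply tendsto_inv_nhdsGT_zero.comp
    rw [tendsto_nhdsWithin_iff]
    constructor
    · have : Tendsto (fun y : ℝ => (x - y) ^ n) (𝓝 x) (𝓝 ((x - x) ^ n)) :=
        ((continuous_const.sub continuous_id).pow n).tendsto x
      simpa [sub_self, zero_pow hn.ne'] using this.mono_left nhdsWithin_le_nhds
    · filter_upwards [self_mem_nhdsWithin] with y hy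
      exact mem_Ioi.mpr (pow_pos (sub_pos.mpr hy) n)
  refine key.congr fun y => ?_
  have hxy : (x - y : ℝ) = -(y - x) := by ring
  rcases Nat.even_or_odd n with h | h
  · rw [hxy, h.neg_pow, h.neg_one_pow, one_mul]
  · rw [hxy, h.neg_pow, h.neg_one_pow, inv_neg]
    ring

lemma jumpF_mul_atTop [F.NeBot] (hc : c ≠ 0) (hu : Tendsto u F (𝓝 c))
    (hv : Tendsto v F atTop) :
    jumpF (fun y => u y * v y) F = (SignType.sign c : ℝ) / 2 := by
  rcases hc.lt_or_gt with h | h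
  · rw [jumpF_of_atBot (hu.neg_mul_atTop h hv), sign_neg h]
    norm_num
  · rw [jumpF_of_atTop (Filter.Tendsto.pos_mul_atTop h hu hv), sign_pos h]
    norm_num

lemma sign_div_eq_sign_mul (a b : ℝ) : SignType.sign (a / b) = SignType.sign (a * b) := by
  rcases lt_trichotomy b 0 with h | h | h
  · rcases lt_trichotomy a 0 with ha | ha | ha
    · rw [sign_pos (div_pos_of_neg_of_neg ha h), sign_pos (mul_pos_of_neg_of_neg ha h)]
    · simp [ha]
    · rw [sign_neg (div_neg_of_pos_of_neg ha h), sign_neg (mul_neg_of_pos_of_neg ha h)]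
  · simp [h]
  · rcases lt_trichotomy a 0 with ha | ha | ha
    · rw [sign_neg (div_neg_of_neg_of_pos ha h), sign_neg (mul_neg_of_neg_of_pos ha h)]
    · simp [ha]
    · rw [sign_pos (div_pos ha h), sign_pos (mul_pos ha h)]

end part2

section part3
variable {p q : Polynomial ℝ} {x : ℝ} {F : Filter ℝ} {c : ℝ}

lemma jump_rat_zero [F.NeBot] (hF : F ≤ 𝓝 x) (hpx : p.eval x ≠ 0) :
    jumpF (fun y => q.eval y / p.eval y) F = 0 := by
  apply jumpF_of_tendsto_nhds (c := q.eval x / p.eval x)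
  exact ((q.continuous.tendsto x).div (p.continuous.tendsto x) hpx).mono_left hF

lemma eventually_sign_eq (q : Polynomial ℝ) (hqx : q.eval x ≠ 0) :
    ∀ᶠ y in 𝓝 x, SignType.sign (q.eval y) = SignType.sign (q.eval x) := by
  rcases hqx.lt_or_gt with h | h
  · filter_upwards [(q.continuous.tendsto x).eventually (eventually_lt_nhds h)] with y hy
    rw [sign_neg hy, sign_neg h]
  · filter_upwards [(q.continuous.tendsto x).eventually (eventually_gt_nhds h)] with y hy
    rw [sign_pos hy, sign_pos h]

lemma eval_eq_pow_mul (p : Polynomial ℝ) (x y : ℝ) :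
    p.eval y = (y - x) ^ (p.rootMultiplicity x)
      * (p /ₘ (X - C x) ^ (p.rootMultiplicity x)).eval y := by
  conv_lhs => rw [← Polynomial.pow_mul_divByMonic_rootMultiplicity_eq p x]
  simp [Polynomial.eval_mul, Polynomial.eval_pow]

lemma jump_rat_right (hp : p ≠ 0) (hpx : p.eval x = 0) (hqx : q.eval x ≠ 0) :
    jumpF (fun y => q.eval y / p.eval y) (𝓝[>] x)
      = (SignType.sign (q.eval x * (p /ₘ (X - C x) ^ (p.rootMultiplicity x)).eval x) : ℝ) / 2 := by
  set n := p.rootMultiplicity x with hn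
  set p₁ := p /ₘ (X - C x) ^ n with hp₁
  have hn0 : 0 < n := (Polynomial.rootMultiplicity_pos hp).mpr hpx
  have hp₁x : p₁.eval x ≠ 0 := Polynomial.eval_divByMonic_pow_rootMultiplicity_ne_zero x hp
  have hfe : (fun y => q.eval y / p.eval y)
      = fun y => (q.eval y / p₁.eval y) * (((y - x) ^ n)⁻¹) := by
    funext y
    rw [eval_eq_pow_mul p x y, ← hn, ← hp₁, div_mul_eq_div_div_swap, div_eq_mul_inv]
  rw [hfe]
  refine (jumpF_mul_atTop (c := q.eval x / p₁.eval x)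
    (div_ne_zero hqx hp₁x)
    (((q.continuous.tendsto x).div (p₁.continuous.tendsto x) hp₁x).mono_left nhdsWithin_le_nhds)
    (tendsto_sub_pow_inv_right x hn0)).trans ?_
  rw [sign_div_eq_sign_mul]

lemma jump_rat_left (hp : p ≠ 0) (hpx : p.eval x = 0) (hqx : q.eval x ≠ 0) :
    jumpF (fun y => q.eval y / p.eval y) (𝓝[<] x)
      = (SignType.sign ((-1 : ℝ) ^ (p.rootMultiplicity x) * q.eval x
          * (p /ₘ (X - C x) ^ (p.rootMultiplicity x)).eval x) : ℝ) / 2 := by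
  set n := p.rootMultiplicity x with hn
  set p₁ := p /ₘ (X - C x) ^ n with hp₁
  have hn0 : 0 < n := (Polynomial.rootMultiplicity_pos hp).mpr hpx
  have hp₁x : p₁.eval x ≠ 0 := Polynomial.eval_divByMonic_pow_rootMultiplicity_ne_zero x hp
  have hsq : ((-1 : ℝ) ^ n) * ((-1 : ℝ) ^ n) = 1 := by
    rw [← pow_add]
    exact Even.neg_one_pow ⟨n, rfl⟩
  have hfe : (fun y => q.eval y / p.eval y)
      = fun y => ((q.eval y / p₁.eval y) * ((-1 : ℝ) ^ n)) * ((-1 : ℝ) ^ n * ((y - x) ^ n)⁻¹) := by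
    funext y
    rw [eval_eq_pow_mul p x y, ← hn, ← hp₁, div_mul_eq_div_div_swap, div_eq_mul_inv]
    calc q.eval y / p₁.eval y * ((y - x) ^ n)⁻¹
        = (q.eval y / p₁.eval y) * (((-1:ℝ)^n) * ((-1:ℝ)^n)) * ((y - x) ^ n)⁻¹ := by
          rw [hsq, mul_one]
      _ = _ := by ring
  have hc : q.eval x / p₁.eval x * (-1 : ℝ) ^ n ≠ 0 := by
    exact mul_ne_zero (div_ne_zero hqx hp₁x) (pow_ne_zero _ (by norm_num))
  rw [hfe]
  refine (jumpF_mul_atTop (c := q.eval x / p₁.eval x * (-1 : ℝ) ^ n) hc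
    ((((q.continuous.tendsto x).div (p₁.continuous.tendsto x) hp₁x).mono_left
      nhdsWithin_le_nhds).mul tendsto_const_nhds)
    (tendsto_sub_pow_inv_left x hn0)).trans ?_
  rw [show q.eval x / p₁.eval x * (-1:ℝ)^n = ((-1:ℝ)^n * q.eval x) / p₁.eval x by ring,
    sign_div_eq_sign_mul, mul_assoc]

end part3

section part4

variable {a b c : ℝ} {f g : ℝ → ℝ} {p q s : Polynomial ℝ}

lemma cindexE_eq (a b : ℝ) (f : ℝ → ℝ) :
    cindexE a b f = (∑ᶠ x ∈ Ico a b, jumpF f (𝓝[>] x)) -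
      ∑ᶠ x ∈ Ioc a b, jumpF f (𝓝[<] x) := by
  unfold cindexE
  have h1 : {x : ℝ | jumpF f (𝓝[>] x) ≠ 0 ∧ a ≤ x ∧ x < b}
      = Ico a b ∩ Function.support (fun x => jumpF f (𝓝[>] x)) := by
    ext x
    simp only [Set.mem_setOf_eq, Set.mem_inter_iff, Set.mem_Ico, Function.mem_support]
    tauto
  have h2 : {x : ℝ | jumpF f (𝓝[<] x) ≠ 0 ∧ a < x ∧ x ≤ b}
      = Ioc a b ∩ Function.support (fun x => jumpF f (𝓝[<] x)) := by
    ext x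
    simp only [Set.mem_setOf_eq, Set.mem_inter_iff, Set.mem_Ioc, Function.mem_support]
    tauto
  rw [h1, h2, finsum_mem_inter_support, finsum_mem_inter_support]

lemma finite_support_jumpR (hp : p ≠ 0) (q : Polynomial ℝ) :
    (Function.support fun x => jumpF (fun y => q.eval y / p.eval y) (𝓝[>] x)).Finite := by
  apply (Polynomial.finite_setOf_isRoot hp).subset
  intro x hx
  by_contra hr
  exact hx (jump_rat_zero nhdsWithin_le_nhds hr)

lemma finite_support_jumpL (hp : p ≠ 0) (q : Polynomial ℝ) :
    (Function.support fun x => jumpF (fun y => q.eval y / p.eval y) (𝓝[<] x)).Finite := by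
  apply (Polynomial.finite_setOf_isRoot hp).subset
  intro x hx
  by_contra hr
  exact hx (jump_rat_zero nhdsWithin_le_nhds hr)

lemma finsum_mem_neg' (s : Set ℝ) (f : ℝ → ℝ) (h : (Function.support f).Finite) :
    ∑ᶠ x ∈ s, -f x = -∑ᶠ x ∈ s, f x := by
  have hsupp : Function.support (fun x => -f x) = Function.support f := by
    ext y; simp
  rw [← finsum_mem_inter_support (fun x => -f x) s, ← finsum_mem_inter_support f s, hsupp,
    finsum_mem_neg_distrib _ (h.subset Set.inter_subset_right)]

lemma cindexE_congr (hR : ∀ x, jumpF f (𝓝[>] x) = jumpF g (𝓝[>] x))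
    (hL : ∀ x, jumpF f (𝓝[<] x) = jumpF g (𝓝[<] x)) :
    cindexE a b f = cindexE a b g := by
  unfold cindexE
  simp only [hR, hL]

lemma cindexPolyE_neg (a b : ℝ) (s q : Polynomial ℝ) (hq : q ≠ 0) :
    cindexPolyE a b (-s) q = - cindexPolyE a b s q := by
  unfold cindexPolyE
  have eR : ∀ x : ℝ, jumpF (fun y => (-s).eval y / q.eval y) (𝓝[>] x)
      = - jumpF (fun y => s.eval y / q.eval y) (𝓝[>] x) := by
    intro x
    rw [← jumpF_neg]
    apply jumpF_congr
    filter_upwards with y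
    simp [neg_div]
  have eL : ∀ x : ℝ, jumpF (fun y => (-s).eval y / q.eval y) (𝓝[<] x)
      = - jumpF (fun y => s.eval y / q.eval y) (𝓝[<] x) := by
    intro x
    rw [← jumpF_neg]
    apply jumpF_congr
    filter_upwards with y
    simp [neg_div]
  rw [cindexE_eq, cindexE_eq]
  simp only [eR, eL]
  rw [finsum_mem_neg' _ _ (finite_support_jumpR hq s),
    finsum_mem_neg' _ _ (finite_support_jumpL hq s)]
  ring

lemma cindexPolyE_split (hp : p ≠ 0) (hab : a ≤ b) (hbc : b ≤ c) :
    cindexPolyE a c q p = cindexPolyE a b q p + cindexPolyE b c q p := by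
  unfold cindexPolyE
  rw [cindexE_eq, cindexE_eq, cindexE_eq,
    ← Set.Ico_union_Ico_eq_Ico hab hbc, ← Set.Ioc_union_Ioc_eq_Ioc hab hbc,
    finsum_mem_union' (Set.Ico_disjoint_Ico_same)
      ((finite_support_jumpR hp q).subset Set.inter_subset_right)
      ((finite_support_jumpR hp q).subset Set.inter_subset_right),
    finsum_mem_union' (Set.Ioc_disjoint_Ioc_of_le le_rfl)
      ((finite_support_jumpL hp q).subset Set.inter_subset_right)
      ((finite_support_jumpL hp q).subset Set.inter_subset_right)]
  ring

lemma cindexE_endpoints (hab : a < b)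
    (hR : ∀ x ∈ Ioo a b, jumpF f (𝓝[>] x) = 0)
    (hL : ∀ x ∈ Ioo a b, jumpF f (𝓝[<] x) = 0) :
    cindexE a b f = jumpF f (𝓝[>] a) - jumpF f (𝓝[<] b) := by
  rw [cindexE_eq]
  congr 1
  · rw [finsum_mem_inter_support_eq _ (Ico a b) {a}, finsum_mem_singleton]
    ext x
    simp only [Set.mem_inter_iff, Set.mem_Ico, Function.mem_support, Set.mem_singleton_iff]
    constructor
    · rintro ⟨⟨h1, h2⟩, h3⟩
      refine ⟨?_, h3⟩
      by_contra hxa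
      exact h3 (hR x ⟨lt_of_le_of_ne h1 (Ne.symm hxa), h2⟩)
    · rintro ⟨rfl, h3⟩
      exact ⟨⟨le_refl _, hab⟩, h3⟩
  · rw [finsum_mem_inter_support_eq _ (Ioc a b) {b}, finsum_mem_singleton]
    ext x
    simp only [Set.mem_inter_iff, Set.mem_Ioc, Function.mem_support, Set.mem_singleton_iff]
    constructor
    · rintro ⟨⟨h1, h2⟩, h3⟩
      refine ⟨?_, h3⟩
      by_contra hxb
      exact h3 (hL x ⟨h1, lt_of_le_of_ne h2 hxb⟩)
    · rintro ⟨rfl, h3⟩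
      exact ⟨⟨hab, le_refl _⟩, h3⟩

end part4

section part5

variable {p q : Polynomial ℝ} {a b : ℝ}

lemma sign_constant {g : Polynomial ℝ} {a b u v : ℝ}
    (hroot : ∀ x ∈ Ioo a b, g.eval x ≠ 0) (hu : u ∈ Icc a b) (hv : v ∈ Icc a b)
    (huv : u ≤ v) (hgu : g.eval u ≠ 0) (hgv : g.eval v ≠ 0) :
    SignType.sign (g.eval u) = SignType.sign (g.eval v) := by
  rcases eq_or_lt_of_le huv with rfl | hlt
  · rfl
  have hcont : ContinuousOn (fun y => g.eval y) (Icc u v) := g.continuous.continuousOn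
  have hIoo : Ioo u v ⊆ Ioo a b := Ioo_subset_Ioo hu.1 hv.2
  rcases hgu.lt_or_gt with h1 | h1 <;> rcases hgv.lt_or_gt with h2 | h2
  · rw [sign_neg h1, sign_neg h2]
  · exfalso
    obtain ⟨z, hz, hz0⟩ := intermediate_value_Ioo (le_of_lt hlt) hcont (Set.mem_Ioo.mpr ⟨h1, h2⟩)
    exact hroot z (hIoo hz) hz0
  · exfalso
    obtain ⟨z, hz, hz0⟩ := intermediate_value_Ioo' (le_of_lt hlt) hcont (Set.mem_Ioo.mpr ⟨h2, h1⟩)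
    exact hroot z (hIoo hz) hz0
  · rw [sign_pos h1, sign_pos h2]

lemma coprime_eval_ne (hcop : IsCoprime p q) (x : ℝ) : ¬(p.eval x = 0 ∧ q.eval x = 0) := by
  rintro ⟨h1, h2⟩
  have hu : IsUnit (X - C x) :=
    hcop.isUnit_of_dvd' (Polynomial.dvd_iff_isRoot.mpr h1) (Polynomial.dvd_iff_isRoot.mpr h2)
  exact Polynomial.not_isUnit_X_sub_C x hu

lemma eventually_sign_right (hp : p ≠ 0) (hpa : p.eval a = 0) (hqa : q.eval a ≠ 0) :
    ∀ᶠ y in 𝓝[>] a, SignType.sign ((p*q).eval y)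
      = SignType.sign (q.eval a * (p /ₘ (X - C a) ^ (p.rootMultiplicity a)).eval a) := by
  set n := p.rootMultiplicity a with hn
  set p₁ := p /ₘ (X - C a) ^ n with hp₁
  have hp₁a : p₁.eval a ≠ 0 := Polynomial.eval_divByMonic_pow_rootMultiplicity_ne_zero a hp
  have hprod : (p₁ * q).eval a ≠ 0 := by
    rw [Polynomial.eval_mul]; exact mul_ne_zero hp₁a hqa
  filter_upwards [(eventually_sign_eq (p₁ * q) hprod).filter_mono nhdsWithin_le_nhds,
    self_mem_nhdsWithin] with y hy hy'
  have hgy : (p*q).eval y = (y - a) ^ n * (p₁ * q).eval y := by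
    rw [Polynomial.eval_mul, Polynomial.eval_mul, eval_eq_pow_mul p a y, ← hn, ← hp₁]
    ring
  rw [hgy, sign_mul, sign_pos (pow_pos (sub_pos.mpr hy') n), one_mul, hy,
    Polynomial.eval_mul, mul_comm]

lemma eventually_sign_left (hp : p ≠ 0) (hpb : p.eval b = 0) (hqb : q.eval b ≠ 0) :
    ∀ᶠ y in 𝓝[<] b, SignType.sign ((p*q).eval y)
      = SignType.sign ((-1 : ℝ) ^ (p.rootMultiplicity b) * q.eval b
          * (p /ₘ (X - C b) ^ (p.rootMultiplicity b)).eval b) := by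
  set n := p.rootMultiplicity b with hn
  set p₁ := p /ₘ (X - C b) ^ n with hp₁
  have hp₁b : p₁.eval b ≠ 0 := Polynomial.eval_divByMonic_pow_rootMultiplicity_ne_zero b hp
  have hprod : (C ((-1:ℝ)^n) * p₁ * q).eval b ≠ 0 := by
    simp only [Polynomial.eval_mul, Polynomial.eval_C]
    exact mul_ne_zero (mul_ne_zero (pow_ne_zero _ (by norm_num)) hp₁b) hqb
  filter_upwards [(eventually_sign_eq (C ((-1:ℝ)^n) * p₁ * q) hprod).filter_mono
    nhdsWithin_le_nhds, self_mem_nhdsWithin] with y hy hy'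
  have hgy : (p*q).eval y = (b - y) ^ n * (C ((-1:ℝ)^n) * p₁ * q).eval y := by
    simp only [Polynomial.eval_mul, Polynomial.eval_C]
    rw [eval_eq_pow_mul p b y, ← hn, ← hp₁]
    have key : ((b - y : ℝ)) ^ n * ((-1 : ℝ) ^ n) = (y - b) ^ n := by
      rw [← mul_pow, show (b - y : ℝ) * (-1) = y - b by ring]
    rw [← key]
    ring
  rw [hgy, sign_mul, sign_pos (pow_pos (sub_pos.mpr hy') n), one_mul, hy]
  simp only [Polynomial.eval_mul, Polynomial.eval_C]
  rw [mul_assoc, mul_comm (p₁.eval b) (q.eval b), ← mul_assoc]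

lemma basehalf_right_root (hab : a < b) (hp : p ≠ 0) (hq : q ≠ 0)
    (hpa : p.eval a = 0) (hqa : q.eval a ≠ 0)
    (hIoo : ∀ x ∈ Ioo a b, (p*q).eval x ≠ 0) {m : ℝ} (hm : m ∈ Ioo a b) :
    jumpF (fun y => q.eval y / p.eval y) (𝓝[>] a)
      + jumpF (fun y => p.eval y / q.eval y) (𝓝[>] a)
    = ((SignType.sign ((p*q).eval m) : ℝ) - (SignType.sign ((p*q).eval a) : ℝ)) / 2 := by
  have h2 : jumpF (fun y => p.eval y / q.eval y) (𝓝[>] a) = 0 :=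
    jump_rat_zero nhdsWithin_le_nhds hqa
  rw [jump_rat_right hp hpa hqa, h2, add_zero]
  have hsa : (p*q).eval a = 0 := by simp [Polynomial.eval_mul, hpa]
  rw [hsa, sign_zero]
  obtain ⟨y₀, hy₀s, hy₀m⟩ := ((eventually_sign_right hp hpa hqa).and
    (eventually_mem_set.mpr (Ioo_mem_nhdsGT_of_mem ⟨le_refl a, hm.1⟩))).exists
  have hsm : SignType.sign ((p*q).eval m)
      = SignType.sign (q.eval a * (p /ₘ (X - C a) ^ (p.rootMultiplicity a)).eval a) := by
    rw [← hy₀s]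
    apply (sign_constant hIoo ⟨le_of_lt hy₀m.1, le_of_lt (lt_trans hy₀m.2 hm.2)⟩
      ⟨le_of_lt hm.1, le_of_lt hm.2⟩ (le_of_lt hy₀m.2) ?_ ?_).symm
    · exact hIoo y₀ ⟨hy₀m.1, lt_trans hy₀m.2 hm.2⟩
    · exact hIoo m hm
  rw [hsm]
  norm_num

lemma basehalf_right (hab : a < b) (hp : p ≠ 0) (hq : q ≠ 0)
    (hne : ¬(p.eval a = 0 ∧ q.eval a = 0))
    (hIoo : ∀ x ∈ Ioo a b, (p*q).eval x ≠ 0) {m : ℝ} (hm : m ∈ Ioo a b) :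
    jumpF (fun y => q.eval y / p.eval y) (𝓝[>] a)
      + jumpF (fun y => p.eval y / q.eval y) (𝓝[>] a)
    = ((SignType.sign ((p*q).eval m) : ℝ) - (SignType.sign ((p*q).eval a) : ℝ)) / 2 := by
  by_cases hpa : p.eval a = 0
  · exact basehalf_right_root hab hp hq hpa (fun hqa => hne ⟨hpa, hqa⟩) hIoo hm
  by_cases hqa : q.eval a = 0
  · have hIoo' : ∀ x ∈ Ioo a b, (q*p).eval x ≠ 0 := by
      intro x hx; rw [mul_comm]; exact hIoo x hx
    have := basehalf_right_root hab hq hp hqa hpa hIoo' (m := m) hm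
    rw [mul_comm q p] at this
    linarith [this]
  · have h1 : jumpF (fun y => q.eval y / p.eval y) (𝓝[>] a) = 0 :=
      jump_rat_zero nhdsWithin_le_nhds hpa
    have h2 : jumpF (fun y => p.eval y / q.eval y) (𝓝[>] a) = 0 :=
      jump_rat_zero nhdsWithin_le_nhds hqa
    have hga : (p*q).eval a ≠ 0 := by
      rw [Polynomial.eval_mul]; exact mul_ne_zero hpa hqa
    have hgm : (p*q).eval m ≠ 0 := hIoo m hm
    have : SignType.sign ((p*q).eval a) = SignType.sign ((p*q).eval m) :=
      sign_constant hIoo ⟨le_refl a, le_of_lt hab⟩ ⟨le_of_lt hm.1, le_of_lt hm.2⟩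
        (le_of_lt hm.1) hga hgm
    rw [h1, h2, this]
    ring

lemma basehalf_left_root (hab : a < b) (hp : p ≠ 0) (hq : q ≠ 0)
    (hpb : p.eval b = 0) (hqb : q.eval b ≠ 0)
    (hIoo : ∀ x ∈ Ioo a b, (p*q).eval x ≠ 0) {m : ℝ} (hm : m ∈ Ioo a b) :
    jumpF (fun y => q.eval y / p.eval y) (𝓝[<] b)
      + jumpF (fun y => p.eval y / q.eval y) (𝓝[<] b)
    = ((SignType.sign ((p*q).eval m) : ℝ) - (SignType.sign ((p*q).eval b) : ℝ)) / 2 := by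
  have h2 : jumpF (fun y => p.eval y / q.eval y) (𝓝[<] b) = 0 :=
    jump_rat_zero nhdsWithin_le_nhds hqb
  rw [jump_rat_left hp hpb hqb, h2, add_zero]
  have hsb : (p*q).eval b = 0 := by simp [Polynomial.eval_mul, hpb]
  rw [hsb, sign_zero]
  obtain ⟨y₀, hy₀s, hy₀m⟩ := ((eventually_sign_left hp hpb hqb).and
    (eventually_mem_set.mpr (Ioo_mem_nhdsLT_of_mem ⟨hm.2, le_refl b⟩))).exists
  have hsm : SignType.sign ((p*q).eval m)
      = SignType.sign ((-1:ℝ) ^ (p.rootMultiplicity b) * q.eval b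
          * (p /ₘ (X - C b) ^ (p.rootMultiplicity b)).eval b) := by
    rw [← hy₀s]
    apply sign_constant hIoo ⟨le_of_lt hm.1, le_of_lt hm.2⟩
      ⟨le_of_lt (lt_trans hm.1 hy₀m.1), le_of_lt hy₀m.2⟩ (le_of_lt hy₀m.1) ?_ ?_
    · exact hIoo m hm
    · exact hIoo y₀ ⟨lt_trans hm.1 hy₀m.1, hy₀m.2⟩
  rw [hsm]
  norm_num

lemma basehalf_left (hab : a < b) (hp : p ≠ 0) (hq : q ≠ 0)
    (hne : ¬(p.eval b = 0 ∧ q.eval b = 0))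
    (hIoo : ∀ x ∈ Ioo a b, (p*q).eval x ≠ 0) {m : ℝ} (hm : m ∈ Ioo a b) :
    jumpF (fun y => q.eval y / p.eval y) (𝓝[<] b)
      + jumpF (fun y => p.eval y / q.eval y) (𝓝[<] b)
    = ((SignType.sign ((p*q).eval m) : ℝ) - (SignType.sign ((p*q).eval b) : ℝ)) / 2 := by
  by_cases hpb : p.eval b = 0
  · exact basehalf_left_root hab hp hq hpb (fun hqb => hne ⟨hpb, hqb⟩) hIoo hm
  by_cases hqb : q.eval b = 0
  · have hIoo' : ∀ x ∈ Ioo a b, (q*p).eval x ≠ 0 := by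
      intro x hx; rw [mul_comm]; exact hIoo x hx
    have := basehalf_left_root hab hq hp hqb hpb hIoo' (m := m) hm
    rw [mul_comm q p] at this
    linarith [this]
  · have h1 : jumpF (fun y => q.eval y / p.eval y) (𝓝[<] b) = 0 :=
      jump_rat_zero nhdsWithin_le_nhds hpb
    have h2 : jumpF (fun y => p.eval y / q.eval y) (𝓝[<] b) = 0 :=
      jump_rat_zero nhdsWithin_le_nhds hqb
    have hgb : (p*q).eval b ≠ 0 := by
      rw [Polynomial.eval_mul]; exact mul_ne_zero hpb hqb
    have hgm : (p*q).eval m ≠ 0 := hIoo m hm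
    have : SignType.sign ((p*q).eval m) = SignType.sign ((p*q).eval b) :=
      sign_constant hIoo ⟨le_of_lt hm.1, le_of_lt hm.2⟩ ⟨le_of_lt hab, le_refl b⟩
        (le_of_lt hm.2) hgm hgb
    rw [h1, h2, this]
    ring

end part5

section part6

variable {p q : Polynomial ℝ} {a b : ℝ}

lemma cross_base (hab : a < b) (hp : p ≠ 0) (hq : q ≠ 0)
    (hnea : ¬(p.eval a = 0 ∧ q.eval a = 0)) (hneb : ¬(p.eval b = 0 ∧ q.eval b = 0))
    (hIoo : ∀ x ∈ Ioo a b, (p*q).eval x ≠ 0) :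
    cindexPolyE a b q p + cindexPolyE a b p q
      = ((SignType.sign ((p*q).eval b) : ℝ) - (SignType.sign ((p*q).eval a) : ℝ)) / 2 := by
  have hm : (a + b) / 2 ∈ Ioo a b := ⟨by linarith, by linarith⟩
  have hint : ∀ x ∈ Ioo a b, p.eval x ≠ 0 ∧ q.eval x ≠ 0 := by
    intro x hx
    have := hIoo x hx
    rw [Polynomial.eval_mul] at this
    exact ⟨left_ne_zero_of_mul this, right_ne_zero_of_mul this⟩
  have e1 : cindexPolyE a b q p
      = jumpF (fun y => q.eval y / p.eval y) (𝓝[>] a)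
        - jumpF (fun y => q.eval y / p.eval y) (𝓝[<] b) :=
    cindexE_endpoints hab
      (fun x hx => jump_rat_zero nhdsWithin_le_nhds (hint x hx).1)
      (fun x hx => jump_rat_zero nhdsWithin_le_nhds (hint x hx).1)
  have e2 : cindexPolyE a b p q
      = jumpF (fun y => p.eval y / q.eval y) (𝓝[>] a)
        - jumpF (fun y => p.eval y / q.eval y) (𝓝[<] b) :=
    cindexE_endpoints hab
      (fun x hx => jump_rat_zero nhdsWithin_le_nhds (hint x hx).2)
      (fun x hx => jump_rat_zero nhdsWithin_le_nhds (hint x hx).2)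
  have hA := basehalf_right hab hp hq hnea hIoo hm
  have hB := basehalf_left hab hp hq hneb hIoo hm
  rw [e1, e2]
  linarith [hA, hB]

lemma cross_aux (n : ℕ) : ∀ a b : ℝ, a < b → p ≠ 0 → q ≠ 0 → IsCoprime p q →
    ({x | x ∈ Ioo a b ∧ (p*q).eval x = 0}).ncard ≤ n →
    cindexPolyE a b q p + cindexPolyE a b p q
      = ((SignType.sign ((p*q).eval b) : ℝ) - (SignType.sign ((p*q).eval a) : ℝ)) / 2 := by
  induction n with
  | zero =>
    intro a b hab hp hq hcop hcard
    have hpq : (p * q : Polynomial ℝ) ≠ 0 := mul_ne_zero hp hq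
    have hfin : ({x | x ∈ Ioo a b ∧ (p*q).eval x = 0}).Finite :=
      (Polynomial.finite_setOf_isRoot hpq).subset (fun x hx => hx.2)
    have hempty : {x | x ∈ Ioo a b ∧ (p*q).eval x = 0} = ∅ :=
      (Set.ncard_eq_zero hfin).mp (Nat.le_zero.mp hcard)
    have hIoo : ∀ x ∈ Ioo a b, (p*q).eval x ≠ 0 := by
      intro x hx h0
      have : x ∈ {x | x ∈ Ioo a b ∧ (p*q).eval x = 0} := ⟨hx, h0⟩
      rw [hempty] at this
      exact Set.notMem_empty x this
    exact cross_base hab hp hq (coprime_eval_ne hcop a) (coprime_eval_ne hcop b) hIoo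
  | succ n ih =>
    intro a b hab hp hq hcop hcard
    have hpq : (p * q : Polynomial ℝ) ≠ 0 := mul_ne_zero hp hq
    have hfin : ({x | x ∈ Ioo a b ∧ (p*q).eval x = 0}).Finite :=
      (Polynomial.finite_setOf_isRoot hpq).subset (fun x hx => hx.2)
    by_cases hne : {x | x ∈ Ioo a b ∧ (p*q).eval x = 0} = ∅
    · have hIoo : ∀ x ∈ Ioo a b, (p*q).eval x ≠ 0 := by
        intro x hx h0
        have : x ∈ {x | x ∈ Ioo a b ∧ (p*q).eval x = 0} := ⟨hx, h0⟩
        rw [hne] at this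
        exact Set.notMem_empty x this
      exact cross_base hab hp hq (coprime_eval_ne hcop a) (coprime_eval_ne hcop b) hIoo
    · obtain ⟨m, hm⟩ := Set.nonempty_iff_ne_empty.mpr hne
      have hm1 : m ∈ Ioo a b := hm.1
      have hsub1 : {x | x ∈ Ioo a m ∧ (p*q).eval x = 0}
          ⊆ {x | x ∈ Ioo a b ∧ (p*q).eval x = 0} \ {m} := by
        rintro x ⟨hx, hx0⟩
        exact ⟨⟨⟨hx.1, lt_trans hx.2 hm1.2⟩, hx0⟩, fun hxm => (hxm ▸ hx.2).false⟩
      have hsub2 : {x | x ∈ Ioo m b ∧ (p*q).eval x = 0}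
          ⊆ {x | x ∈ Ioo a b ∧ (p*q).eval x = 0} \ {m} := by
        rintro x ⟨hx, hx0⟩
        exact ⟨⟨⟨lt_trans hm1.1 hx.1, hx.2⟩, hx0⟩, fun hxm => (hxm ▸ hx.1).false⟩
      have hdcard : ({x | x ∈ Ioo a b ∧ (p*q).eval x = 0} \ {m}).ncard ≤ n := by
        rw [Set.ncard_diff_singleton_of_mem hm]
        omega
      have hc1 := ih a m hm1.1 hp hq hcop
        (le_trans (Set.ncard_le_ncard hsub1 (hfin.subset Set.diff_subset)) hdcard)
      have hc2 := ih m b hm1.2 hp hq hcop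
        (le_trans (Set.ncard_le_ncard hsub2 (hfin.subset Set.diff_subset)) hdcard)
      rw [cindexPolyE_split hp (le_of_lt hm1.1) (le_of_lt hm1.2),
        cindexPolyE_split hq (le_of_lt hm1.1) (le_of_lt hm1.2)]
      linarith [hc1, hc2]

lemma cross (hab : a < b) (hp : p ≠ 0) (hq : q ≠ 0) (hcop : IsCoprime p q) :
    cindexPolyE a b q p + cindexPolyE a b p q
      = ((SignType.sign ((p*q).eval b) : ℝ) - (SignType.sign ((p*q).eval a) : ℝ)) / 2 :=
  cross_aux ({x | x ∈ Ioo a b ∧ (p*q).eval x = 0}).ncard a b hab hp hq hcop (le_refl _)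

end part6

section part7

variable {p q : Polynomial ℝ} {a b x : ℝ}

lemma eventually_eval_ne_right (hp : p ≠ 0) (x : ℝ) : ∀ᶠ y in 𝓝[>] x, p.eval y ≠ 0 := by
  have hS : ({y : ℝ | p.IsRoot y} \ {x}).Finite := (Polynomial.finite_setOf_isRoot hp).diff
  have hx : ({y : ℝ | p.IsRoot y} \ {x})ᶜ ∈ 𝓝 x :=
    hS.isClosed.isOpen_compl.mem_nhds (by simp)
  filter_upwards [mem_nhdsWithin_of_mem_nhds hx, self_mem_nhdsWithin] with y hy hy' h0
  exact hy ⟨h0, ne_of_gt hy'⟩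

lemma eventually_eval_ne_left (hp : p ≠ 0) (x : ℝ) : ∀ᶠ y in 𝓝[<] x, p.eval y ≠ 0 := by
  have hS : ({y : ℝ | p.IsRoot y} \ {x}).Finite := (Polynomial.finite_setOf_isRoot hp).diff
  have hx : ({y : ℝ | p.IsRoot y} \ {x})ᶜ ∈ 𝓝 x :=
    hS.isClosed.isOpen_compl.mem_nhds (by simp)
  filter_upwards [mem_nhdsWithin_of_mem_nhds hx, self_mem_nhdsWithin] with y hy hy' h0
  exact hy ⟨h0, ne_of_lt hy'⟩

lemma jump_mod_right (hq : q ≠ 0) (x : ℝ) :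
    jumpF (fun y => p.eval y / q.eval y) (𝓝[>] x)
      = jumpF (fun y => (p % q).eval y / q.eval y) (𝓝[>] x) := by
  have h1 : (fun y => p.eval y / q.eval y)
      =ᶠ[𝓝[>] x] (fun y => (p % q).eval y / q.eval y + (p / q).eval y) := by
    filter_upwards [eventually_eval_ne_right hq x] with y hy
    have := EuclideanDomain.div_add_mod p q
    have heval : q.eval y * (p / q).eval y + (p % q).eval y = p.eval y := by
      conv_rhs => rw [← this]
      simp [Polynomial.eval_add, Polynomial.eval_mul]
    field_simp
    linarith [heval]
  rw [jumpF_congr h1]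
  exact jumpF_add_tendsto (((p / q).continuous.tendsto x).mono_left nhdsWithin_le_nhds)

lemma jump_mod_left (hq : q ≠ 0) (x : ℝ) :
    jumpF (fun y => p.eval y / q.eval y) (𝓝[<] x)
      = jumpF (fun y => (p % q).eval y / q.eval y) (𝓝[<] x) := by
  have h1 : (fun y => p.eval y / q.eval y)
      =ᶠ[𝓝[<] x] (fun y => (p % q).eval y / q.eval y + (p / q).eval y) := by
    filter_upwards [eventually_eval_ne_left hq x] with y hy
    have := EuclideanDomain.div_add_mod p q
    have heval : q.eval y * (p / q).eval y + (p % q).eval y = p.eval y := by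
      conv_rhs => rw [← this]
      simp [Polynomial.eval_add, Polynomial.eval_mul]
    field_simp
    linarith [heval]
  rw [jumpF_congr h1]
  exact jumpF_add_tendsto (((p / q).continuous.tendsto x).mono_left nhdsWithin_le_nhds)

lemma cindexPolyE_mod (hq : q ≠ 0) (a b : ℝ) :
    cindexPolyE a b p q = cindexPolyE a b (p % q) q :=
  cindexE_congr (fun x => jump_mod_right hq x) (fun x => jump_mod_left hq x)

lemma smodsAux_succ (n : ℕ) (p q : Polynomial ℝ) :
    smodsAux (n+1) p q = if p = 0 then [] else p :: smodsAux n q (-(p % q)) := rfl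

lemma smodsAux_zero_left (n : ℕ) (q : Polynomial ℝ) : smodsAux n 0 q = [] := by
  cases n <;> simp [smodsAux]

lemma smodsAux_right_zero {q : Polynomial ℝ} (hq : q ≠ 0) {n : ℕ} (hn : 1 ≤ n) :
    smodsAux n q 0 = [q] := by
  obtain ⟨m, rfl⟩ : ∃ m, n = m + 1 := ⟨n - 1, by omega⟩
  simp [smodsAux, hq, smodsAux_zero_left]

lemma mod_eq_zero_of_unit (hq : q ≠ 0) (hdq : q.natDegree = 0) (p : Polynomial ℝ) :
    p % q = 0 := by
  have hqc := Polynomial.eq_C_of_natDegree_eq_zero hdq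
  have hc : q.coeff 0 ≠ 0 := fun h => hq (by rw [hqc, h, Polynomial.C_0])
  rw [Polynomial.mod_def, hqc, Polynomial.leadingCoeff_C, ← Polynomial.C_mul,
    mul_inv_cancel₀ hc, Polynomial.C_1, Polynomial.modByMonic_one]

lemma natDegree_mod_lt (hq : q ≠ 0) (hr : p % q ≠ 0) : (p % q).natDegree < q.natDegree := by
  have hdeg : (p % q).degree < q.degree := EuclideanDomain.mod_lt p hq
  exact Polynomial.natDegree_lt_natDegree hr hdeg

lemma smodsAux_congr : ∀ n : ℕ, ∀ m : ℕ, ∀ p q : Polynomial ℝ,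
    q.natDegree + 2 ≤ n → q.natDegree + 2 ≤ m → smodsAux n p q = smodsAux m p q := by
  intro n
  induction n using Nat.strong_induction_on with
  | _ n IH =>
    intro m p q hn hm
    obtain ⟨n', rfl⟩ : ∃ n', n = n' + 1 := ⟨n - 1, by omega⟩
    obtain ⟨m', rfl⟩ : ∃ m', m = m' + 1 := ⟨m - 1, by omega⟩
    rw [smodsAux_succ, smodsAux_succ]
    by_cases hp : p = 0
    · rw [if_pos hp, if_pos hp]
    rw [if_neg hp, if_neg hp]
    congr 1
    by_cases hq : q = 0
    · rw [hq, smodsAux_zero_left, smodsAux_zero_left]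
    by_cases hr : -(p % q) = 0
    · rw [hr, smodsAux_right_zero hq (by omega), smodsAux_right_zero hq (by omega)]
    · have hdr : (-(p % q)).natDegree < q.natDegree := by
        have h1 := natDegree_mod_lt hq (fun h => hr (by rw [h, neg_zero]))
        simpa using h1
      exact IH n' (by omega) m' q (-(p % q)) (by omega) (by omega)

lemma smods_cons (hp : p ≠ 0) (hq : q ≠ 0) :
    smods p q = p :: smods q (-(p % q)) := by
  unfold smods
  rw [show p.natDegree + q.natDegree + 2 = (p.natDegree + q.natDegree + 1) + 1 from rfl,
    smodsAux_succ, if_neg hp]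
  congr 1
  by_cases hr : -(p % q) = 0
  · rw [hr, Polynomial.natDegree_zero, smodsAux_right_zero hq (by omega),
      smodsAux_right_zero hq (by omega)]
  · have hdq : q.natDegree ≠ 0 := by
      intro h0
      exact hr (by rw [mod_eq_zero_of_unit hq h0 p, neg_zero])
    have hdr : (-(p % q)).natDegree < q.natDegree := by
      have h1 := natDegree_mod_lt hq (fun h => hr (by rw [h, neg_zero]))
      simpa using h1
    exact smodsAux_congr _ _ q (-(p % q)) (by omega) (by omega)

lemma changesAltPolyAt_cons (p q : Polynomial ℝ) (t : List (Polynomial ℝ)) (x : ℝ) :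
    changesAltPolyAt (p :: q :: t) x
      = |(SignType.sign (p.eval x) : ℤ) - (SignType.sign (q.eval x) : ℤ)|
        + changesAltPolyAt (q :: t) x := rfl

lemma abs_sign_sub (u v : ℝ) (h : ¬(u = 0 ∧ v = 0)) :
    |(SignType.sign u : ℤ) - (SignType.sign v : ℤ)| = 1 - (SignType.sign (u*v) : ℤ) := by
  have h' : ¬(SignType.sign u = 0 ∧ SignType.sign v = 0) := by
    rw [sign_eq_zero_iff, sign_eq_zero_iff]; exact h
  rw [sign_mul]
  rcases hsu : SignType.sign u with _ | _ | _ <;> rcases hsv : SignType.sign v with _ | _ | _ <;>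
    simp_all <;> decide

lemma signType_intCast_real (s : SignType) : ((s : ℤ) : ℝ) = (s : ℝ) := by
  cases s <;> simp

lemma cindexE_zero_fn (a b : ℝ) (f : ℝ → ℝ) (hf : ∀ y, f y = 0) : cindexE a b f = 0 := by
  have hjR : ∀ x : ℝ, jumpF f (𝓝[>] x) = 0 := fun x =>
    jumpF_of_tendsto_nhds (c := 0) (by rw [funext hf]; exact tendsto_const_nhds)
  have hjL : ∀ x : ℝ, jumpF f (𝓝[<] x) = 0 := fun x =>
    jumpF_of_tendsto_nhds (c := 0) (by rw [funext hf]; exact tendsto_const_nhds)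
  rw [cindexE_eq]
  simp only [hjR, hjL]
  simp

end part7

section part8

variable {p q : Polynomial ℝ} {a b : ℝ}

lemma cindexPolyE_zero_den (a b : ℝ) (q : Polynomial ℝ) : cindexPolyE a b q 0 = 0 :=
  cindexE_zero_fn a b _ (fun y => by simp)

lemma cindexPolyE_zero_num (a b : ℝ) (p : Polynomial ℝ) : cindexPolyE a b 0 p = 0 :=
  cindexE_zero_fn a b _ (fun y => by simp)

lemma main_aux (a b : ℝ) (hab : a < b) :
    ∀ (N : ℕ) (p q : Polynomial ℝ), (q = 0 ∨ q.natDegree < N) → IsCoprime p q →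
    2 * cindexPolyE a b q p
      = ((changesAltPolyAt (smods p q) a - changesAltPolyAt (smods p q) b : ℤ) : ℝ) := by
  intro N
  induction N with
  | zero =>
    intro p q hN hcop
    have hq0 : q = 0 := by rcases hN with h | h; exacts [h, by omega]
    subst hq0
    by_cases hp : p = 0
    · subst hp
      rw [show smods 0 0 = [] from smodsAux_zero_left _ _, cindexPolyE_zero_den]
      simp [changesAltPolyAt, changesAlt]
    · have hsm : smods p 0 = [p] := smodsAux_right_zero hp (by omega)
      rw [hsm, cindexPolyE_zero_num]
      simp [changesAltPolyAt, changesAlt]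
  | succ N IH =>
    intro p q hN hcop
    by_cases hp : p = 0
    · subst hp
      rw [show smods 0 q = [] from smodsAux_zero_left _ _, cindexPolyE_zero_den]
      simp [changesAltPolyAt, changesAlt]
    by_cases hq : q = 0
    · subst hq
      have hsm : smods p 0 = [p] := smodsAux_right_zero hp (by omega)
      rw [hsm, cindexPolyE_zero_num]
      simp [changesAltPolyAt, changesAlt]
    -- step case
    have hcop' : IsCoprime q (-(p % q)) := by
      have hmodeq : p % q = p + q * (-(p / q)) := by
        have h := EuclideanDomain.div_add_mod p q
        linear_combination h
      have h2 : IsCoprime q (p + q * (-(p / q))) := hcop.symm.add_mul_left_right _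
      rw [← hmodeq] at h2
      exact h2.neg_right
    have hqN : q.natDegree < N + 1 := by
      rcases hN with h | h; exacts [absurd h hq, h]
    have hpre : -(p % q) = 0 ∨ (-(p % q)).natDegree < N := by
      by_cases hr : -(p % q) = 0
      · exact Or.inl hr
      · right
        have hdq : q.natDegree ≠ 0 := fun h0 =>
          hr (by rw [mod_eq_zero_of_unit hq h0 p, neg_zero])
        have hdr : (-(p % q)).natDegree < q.natDegree := by
          have h1 := natDegree_mod_lt hq (fun h => hr (by rw [h, neg_zero]))
          simpa using h1
        omega
    have hIH := IH q (-(p % q)) hpre hcop'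
    obtain ⟨t, ht⟩ : ∃ t, smods q (-(p % q)) = q :: t := by
      unfold smods
      rw [show q.natDegree + (-(p % q)).natDegree + 2
        = (q.natDegree + (-(p % q)).natDegree + 1) + 1 from rfl, smodsAux_succ, if_neg hq]
      exact ⟨_, rfl⟩
    have hcross := cross hab hp hq hcop
    have hmod : cindexPolyE a b p q = - cindexPolyE a b (-(p % q)) q := by
      have h1 := cindexPolyE_neg a b (p % q) q hq
      rw [cindexPolyE_mod hq a b]
      linarith [h1]
    have ha1 : |(SignType.sign (p.eval a) : ℤ) - (SignType.sign (q.eval a) : ℤ)|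
        = 1 - (SignType.sign (p.eval a * q.eval a) : ℤ) :=
      abs_sign_sub _ _ (coprime_eval_ne hcop a)
    have hb1 : |(SignType.sign (p.eval b) : ℤ) - (SignType.sign (q.eval b) : ℤ)|
        = 1 - (SignType.sign (p.eval b * q.eval b) : ℤ) :=
      abs_sign_sub _ _ (coprime_eval_ne hcop b)
    rw [Polynomial.eval_mul, Polynomial.eval_mul] at hcross
    rw [ht] at hIH
    rw [smods_cons hp hq, ht, changesAltPolyAt_cons, changesAltPolyAt_cons, ha1, hb1]
    push_cast
    push_cast at hIH
    linarith [hIH, hcross, hmod]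

end part8

theorem cindex_polyE_changes_alt_itv_mods (a b : ℝ) (p q : Polynomial ℝ)
    (hab : a < b) (hcop : IsCoprime p q) :
    2 * cindexPolyE a b q p
      = ((changesAltPolyAt (smods p q) a - changesAltPolyAt (smods p q) b : ℤ) : ℝ) :=
  main_aux a b hab (q.natDegree + 1) p q (Or.inr (by omega)) hcop
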